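/- Let a, b, λ, c be complex numbers with |c| < 1/4, and give every R_II path the weight determined by the constant sequences a_i = a, b_i = b, λ_i = λ, c_i = c. Then for every n ≥ 0 the family (wt(p))_{p∈Γ_n} is summable in ℂ (i.e., the sum Σ_{p∈Γ_n} wt(p) converges absolutely). -/

import Mathlib

open Polynomial

/-- Steps of an `R_II` path: up, horizontal, down, vertical-down, backward-down. -/
inductive RStep : Type
  | U | H | D | V | B
  deriving DecidableEq

/-- Displacement of each step. -/
def RStep.disp : RStep → ℤ × ℤ
  | .U => (1, 1)
  | .H => (1, 0)
  | .D => (1, -1)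
  | .V => (0, -1)
  | .B => (-1, -1)

/-- End point of a lattice path starting at `start` with the given list of steps. -/
def endPt (start : ℤ × ℤ) : List RStep → ℤ × ℤ
  | [] => start
  | s :: l => endPt (start + s.disp) l

/-- All intermediate heights along the path (starting at height `h`) are nonnegative,
so that the points of the path lie in `ℤ × ℤ≥0`. -/
def heightsNonneg (h : ℤ) : List RStep → Prop
  | [] => True
  | s :: l => 0 ≤ h + s.disp.2 ∧ heightsNonneg (h + s.disp.2) l

/-- `Gamma n r s` is the set of `R_II` paths from `(0, r)` to `(n, s)`. -/
def Gamma (n r s : ℕ) : Set (List RStep) :=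
  {l | heightsNonneg (r : ℤ) l ∧ endPt (0, (r : ℤ)) l = ((n : ℤ), (s : ℤ))}

/-- The list of all points visited by a path. -/
def pathPoints (start : ℤ × ℤ) : List RStep → List (ℤ × ℤ)
  | [] => [start]
  | s :: l => start :: pathPoints (start + s.disp) l

/-- `RGamma n r s` is the set of restricted `R_II` paths from `(0, r)` to `(n, s)`:
paths in `Gamma n r s` whose points have first coordinate `n` only at the final point. -/
def RGamma (n r s : ℕ) : Set (List RStep) :=
  {l | l ∈ Gamma n r s ∧ ∀ p ∈ (pathPoints (0, (r : ℤ)) l).dropLast, p.1 ≠ (n : ℤ)}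

/-- Weight of a single step starting at height `h`:
`1` for `U`, `b_i` for `H`, `λ_i` for `D`, `a_i` for `V`, `c_i` for `B` starting at height `i`. -/
def stepWt {R : Type*} [CommRing R] (a b lam c : ℕ → R) (h : ℤ) : RStep → R
  | .U => 1
  | .H => b h.toNat
  | .D => lam h.toNat
  | .V => a h.toNat
  | .B => c h.toNat

/-- Weight of a path starting at height `h`: the product of the weights of its steps. -/
def pathWt {R : Type*} [CommRing R] (a b lam c : ℕ → R) : ℤ → List RStep → R
  | _, [] => 1
  | h, s :: l => stepWt a b lam c h s * pathWt a b lam c (h + s.disp.2) l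

instance : Fintype RStep :=
  ⟨⟨{.U, .H, .D, .V, .B}, by decide⟩, by intro x; cases x <;> decide⟩

lemma RStep.sum_eq {M : Type*} [AddCommMonoid M] (w : RStep → M) :
    ∑ s : RStep, w s = w .U + w .H + w .D + w .V + w .B := by
  show Finset.sum {RStep.U, .H, .D, .V, .B} w = _
  simp [Finset.sum_insert]
  abel

lemma endPt_eq (l : List RStep) : ∀ start : ℤ × ℤ,
    endPt start l = start + (l.map RStep.disp).sum := by
  induction l with
  | nil => intro start; simp [endPt]
  | cons s t ih => intro start; simp [endPt, ih, add_assoc]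

lemma sum_disp (l : List RStep) :
    (l.map RStep.disp).sum =
      ((l.count .U + l.count .H + l.count .D - l.count .B : ℤ),
       (l.count .U - l.count .D - l.count .V - l.count .B : ℤ)) := by
  induction l with
  | nil => simp; rfl
  | cons s t ih =>
      cases s <;>
        simp [RStep.disp, ih, List.count_cons, Prod.ext_iff, Prod.fst_add, Prod.snd_add] <;>
        (try push_cast) <;>
        first
          | exact ⟨True.intro, True.intro⟩
          | omega
          | ring

lemma pathWt_const {R : Type*} [CommRing R] (a b lam c : R) (l : List RStep) :
    ∀ h : ℤ, pathWt (fun _ => a) (fun _ => b) (fun _ => lam) (fun _ => c) h l =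
      b ^ l.count .H * lam ^ l.count .D * a ^ l.count .V * c ^ l.count .B := by
  induction l with
  | nil => intro h; simp [pathWt]
  | cons s t ih =>
      intro h
      cases s <;> simp [pathWt, stepWt, ih, List.count_cons] <;> ring

lemma prod_map_count (w : RStep → ℝ) (l : List RStep) :
    (l.map w).prod =
      w .U ^ l.count .U * w .H ^ l.count .H * w .D ^ l.count .D *
        w .V ^ l.count .V * w .B ^ l.count .B := by
  induction l with
  | nil => simp
  | cons s t ih =>
      cases s <;> simp [ih, List.count_cons] <;> ring

lemma summable_prod_map (w : RStep → ℝ) (hw : ∀ s, 0 ≤ w s) (hρ : ∑ s, w s < 1) :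
    Summable fun l : List RStep => (l.map w).prod := by
  have hρ0 : 0 ≤ ∑ s, w s := Finset.sum_nonneg fun s _ => hw s
  have key : Summable fun x : Σ n, Fin n → RStep => ∏ i, w (x.2 i) := by
    rw [summable_sigma_of_nonneg (fun x => Finset.prod_nonneg fun i _ => hw _)]
    constructor
    · intro m; exact Summable.of_finite
    · have : ∀ m : ℕ, (∑' v : Fin m → RStep, ∏ i, w (v i)) = (∑ s, w s) ^ m := by
        intro m
        rw [tsum_fintype, Fintype.sum_pow]
      rw [funext this]
      exact summable_geometric_of_lt_one hρ0 hρ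
  have := (List.equivSigmaTuple (α := RStep)).summable_iff.mpr key
  convert this using 1
  funext l
  simp only [Function.comp, List.equivSigmaTuple_apply_fst, List.equivSigmaTuple_apply_snd]
  conv_lhs => rw [← List.ofFn_get l]
  rw [List.map_ofFn, List.prod_ofFn]
  rfl

/-- For constant complex weights `a_i = a`, `b_i = b`, `λ_i = λ`, `c_i = c` with
`|c| < 1/4`, for every `n ≥ 0` the family `(wt(p))_{p∈Γ_n}` is summable in ℂ
(i.e. `Σ_{p∈Γ_n} wt(p)` converges absolutely). -/
theorem stmt12 (a b lam c : ℂ) (hc : ‖c‖ < 1 / 4) (n : ℕ) :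
    Summable fun p : Gamma n 0 0 =>
      pathWt (fun _ => a) (fun _ => b) (fun _ => lam) (fun _ => c) 0 p.1 := by
  set q : ℝ := ‖c‖ with hqdef
  have hq0 : 0 ≤ q := norm_nonneg c
  set ε : ℝ := (1 / 2 - 2 * q) / 6 with hεdef
  have hε : 0 < ε := by rw [hεdef]; linarith
  have hε1 : ε ≤ 1 := by rw [hεdef]; linarith
  set w : RStep → ℝ := fun s => match s with
    | .U => 1 / 2
    | .B => 2 * q
    | _ => ε with hwdef
  have hw : ∀ s, 0 ≤ w s := by intro s; cases s <;> simp [hwdef] <;> linarith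
  have hρ : ∑ s, w s < 1 := by
    rw [RStep.sum_eq]
    show (1:ℝ)/2 + ε + ε + ε + 2*q < 1
    rw [hεdef]; linarith
  set M : ℝ := max 1 (max (‖a‖) (max (‖b‖) (‖lam‖))) with hMdef
  have hM1 : (1:ℝ) ≤ M := le_max_left _ _
  have hM0 : (0:ℝ) ≤ M := le_trans zero_le_one hM1
  have hMa : ‖a‖ ≤ M := le_trans (le_max_left _ _) (le_max_right _ _)
  have hMb : ‖b‖ ≤ M :=
    le_trans (le_trans (le_max_left _ _) (le_max_right _ _)) (le_max_right _ _)
  have hMl : ‖lam‖ ≤ M :=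
    le_trans (le_trans (le_max_right _ _) (le_max_right _ _)) (le_max_right _ _)
  set C : ℝ := M ^ n * 2 ^ n * ε⁻¹ ^ n with hCdef
  have hsum : Summable fun l : List RStep => C * (l.map w).prod :=
    (summable_prod_map w hw hρ).mul_left C
  apply Summable.of_norm_bounded (hsum.subtype (Gamma n 0 0))
  rintro ⟨l, hhn, hend⟩
  -- counts
  set u := l.count RStep.U with hu
  set h := l.count RStep.H with hh
  set d := l.count RStep.D with hd
  set v := l.count RStep.V with hv
  set k := l.count RStep.B with hk
  have hend' : ((u + h + d - k : ℤ), (u - d - v - k : ℤ)) = ((n : ℤ), (0 : ℤ)) := by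
    have := endPt_eq l (0, (0:ℕ))
    rw [hend, sum_disp] at this
    simpa [Prod.ext_iff] using this.symm
  have e1 : (u : ℤ) + h + d - k = n := (Prod.ext_iff.mp hend').1
  have e2 : (u : ℤ) - d - v - k = 0 := (Prod.ext_iff.mp hend').2
  have hku : k ≤ u := by omega
  have hukn : u - k ≤ n := by omega
  have hmn : h + d + v ≤ n := by omega
  -- norm bound
  have habs : ‖pathWt (fun _ => a) (fun _ => b) (fun _ => lam) (fun _ => c) 0 l‖ =
      ‖b‖ ^ h * ‖lam‖ ^ d * ‖a‖ ^ v * q ^ k := by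
    rw [pathWt_const]
    simp [map_mul, map_pow]
    rfl
  have hstep1 : ‖pathWt (fun _ => a) (fun _ => b) (fun _ => lam) (fun _ => c) 0 l‖
      ≤ M ^ n * q ^ k := by
    rw [habs]
    have h1 : ‖b‖ ^ h * ‖lam‖ ^ d * ‖a‖ ^ v
        ≤ M ^ h * M ^ d * M ^ v := by
      apply mul_le_mul (mul_le_mul (pow_le_pow_left₀ (norm_nonneg _) hMb h)
        (pow_le_pow_left₀ (norm_nonneg _) hMl d) (by positivity) (by positivity))
        (pow_le_pow_left₀ (norm_nonneg _) hMa v) (by positivity) (by positivity)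
    have h2 : M ^ h * M ^ d * M ^ v ≤ M ^ n := by
      rw [← pow_add, ← pow_add]
      exact pow_le_pow_right₀ hM1 hmn
    calc ‖b‖ ^ h * ‖lam‖ ^ d * ‖a‖ ^ v * q ^ k
        ≤ M ^ h * M ^ d * M ^ v * q ^ k := by
          apply mul_le_mul_of_nonneg_right h1 (by positivity)
      _ ≤ M ^ n * q ^ k := mul_le_mul_of_nonneg_right h2 (by positivity)
  refine hstep1.trans ?_
  show M ^ n * q ^ k ≤ C * (l.map w).prod
  -- second step : M^n q^k ≤ C * W l
  have hW : (l.map w).prod = (1/2 : ℝ) ^ u * ε ^ (h + d + v) * (2 * q) ^ k := by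
    rw [prod_map_count]
    show (1/2 : ℝ) ^ u * ε ^ h * ε ^ d * ε ^ v * (2*q) ^ k = _
    rw [pow_add, pow_add]; ring
  rw [hW, hCdef]
  obtain ⟨j, hj⟩ : ∃ j, u = j + k := ⟨u - k, by omega⟩
  have hjn : j ≤ n := by omega
  have half : (1/2 : ℝ) ^ u * (2 * q) ^ k = (1/2) ^ j * q ^ k := by
    rw [hj, pow_add, mul_pow]
    have : (1/2 : ℝ) ^ k * 2 ^ k = 1 := by
      rw [← mul_pow]; norm_num
    calc (1/2:ℝ)^j * (1/2)^k * (2^k * q^k) = (1/2)^j * q^k * ((1/2)^k * 2^k) := by ring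
      _ = (1/2)^j * q^k := by rw [this, mul_one]
  have key : M ^ n * q ^ k ≤ M ^ n * 2 ^ n * ε⁻¹ ^ n *
      ((1/2 : ℝ) ^ u * ε ^ (h + d + v) * (2 * q) ^ k) := by
    have rearr : M ^ n * 2 ^ n * ε⁻¹ ^ n * ((1/2 : ℝ) ^ u * ε ^ (h + d + v) * (2 * q) ^ k)
        = M ^ n * q ^ k * (2 ^ n * (1/2) ^ j) * (ε⁻¹ ^ n * ε ^ (h + d + v)) := by
      calc M ^ n * 2 ^ n * ε⁻¹ ^ n * ((1/2 : ℝ) ^ u * ε ^ (h + d + v) * (2 * q) ^ k)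
          = M ^ n * 2 ^ n * ε⁻¹ ^ n * ((1/2 : ℝ) ^ u * (2*q) ^ k * ε ^ (h + d + v)) := by ring
        _ = M ^ n * 2 ^ n * ε⁻¹ ^ n * ((1/2 : ℝ) ^ j * q ^ k * ε ^ (h + d + v)) := by
            rw [half]
        _ = _ := by ring
    rw [rearr]
    have f1 : (1:ℝ) ≤ 2 ^ n * (1/2) ^ j := by
      have : (1/2 : ℝ) ^ n ≤ (1/2) ^ j :=
        pow_le_pow_of_le_one (by norm_num) (by norm_num) hjn
      calc (1:ℝ) = 2 ^ n * (1/2) ^ n := by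
            rw [← mul_pow]; norm_num
        _ ≤ 2 ^ n * (1/2) ^ j := by
            apply mul_le_mul_of_nonneg_left this (by positivity)
    have f2 : (1:ℝ) ≤ ε⁻¹ ^ n * ε ^ (h + d + v) := by
      have : ε ^ n ≤ ε ^ (h + d + v) :=
        pow_le_pow_of_le_one (le_of_lt hε) hε1 hmn
      calc (1:ℝ) = ε⁻¹ ^ n * ε ^ n := by
            rw [← mul_pow, inv_mul_cancel₀ (ne_of_gt hε)]; norm_num
        _ ≤ ε⁻¹ ^ n * ε ^ (h + d + v) := by
            apply mul_le_mul_of_nonneg_left this (by positivity)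
    nlinarith [mul_nonneg (mul_nonneg (pow_nonneg hM0 n) (pow_nonneg hq0 k))
      (le_trans zero_le_one f1), pow_nonneg hM0 n, pow_nonneg hq0 k,
      mul_nonneg (pow_nonneg hM0 n) (pow_nonneg hq0 k)]
  exact key
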